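/- Let G be the (n×n)-grid and let Q ⊆ V_1 be a right-pyramidal set with two different right spots (i_1,j_1) and (i_2,j_2), such that (i_1,j_1) has the largest and (i_2,j_2) the smallest x-coordinate among all right spots of Q. Let Q' = (Q \ {(i_2,j_2)}) ∪ {(i_1+1, j_1+1)}. Then Q' is also a right-pyramidal set and δ(Q') ≤ δ(Q). -/

import Mathlib

/-- Vertices of the (n × n)-grid, as pairs of integers in {1, ..., n}. -/
def gridSet (n : ℕ) : Finset (ℕ × ℕ) := Finset.Icc 1 n ×ˢ Finset.Icc 1 n

/-- Grid adjacency: (x,y) ~ (x',y') iff |x-x'| + |y-y'| = 1. -/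
def gridAdj (p q : ℕ × ℕ) : Prop :=
  |(p.1 : ℤ) - q.1| + |(p.2 : ℤ) - q.2| = 1

instance (p q : ℕ × ℕ) : Decidable (gridAdj p q) := by unfold gridAdj; infer_instance

/-- V₁: the grid vertices (x, y) with x + y even. -/
def V1 (n : ℕ) : Finset (ℕ × ℕ) := (gridSet n).filter (fun p => Even (p.1 + p.2))

/-- N(S): the set of grid vertices outside S that are adjacent to some vertex of S. -/
def gridNbr (n : ℕ) (S : Finset (ℕ × ℕ)) : Finset (ℕ × ℕ) :=
  (gridSet n).filter (fun q => q ∉ S ∧ ∃ p ∈ S, gridAdj p q)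

/-- δ(S) = |N(S)|. -/
def deltaN (n : ℕ) (S : Finset (ℕ × ℕ)) : ℕ := (gridNbr n S).card

/-- A set Q ⊆ V₁ is pyramidal if for every (x, y) ∈ Q with y ≥ 2:
(x-1, y-1) ∈ Q whenever x ≥ 2, and (x+1, y-1) ∈ Q whenever x ≤ n-1. -/
def Pyramidal (n : ℕ) (Q : Finset (ℕ × ℕ)) : Prop :=
  ∀ x y : ℕ, (x, y) ∈ Q → 2 ≤ y →
    (2 ≤ x → (x - 1, y - 1) ∈ Q) ∧ (x + 1 ≤ n → (x + 1, y - 1) ∈ Q)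

/-- A pyramidal set Q is right-pyramidal if (x,y) ∈ Q and x ≤ n-2 imply (x+2, y) ∈ Q. -/
def RightPyramidal (n : ℕ) (Q : Finset (ℕ × ℕ)) : Prop :=
  Pyramidal n Q ∧ ∀ x y : ℕ, (x, y) ∈ Q → x + 2 ≤ n → (x + 2, y) ∈ Q

/-- A right-pyramidal set Q has a right spot at (i, j) if (i, j) ∈ Q and
(i+1, j+1) ∈ V(G) \ Q. -/
def RightSpot (n : ℕ) (Q : Finset (ℕ × ℕ)) (i j : ℕ) : Prop :=
  (i, j) ∈ Q ∧ (i + 1, j + 1) ∈ gridSet n ∧ (i + 1, j + 1) ∉ Q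

/-- Let Q ⊆ V₁ be a right-pyramidal set with two different right spots (i₁, j₁) and
(i₂, j₂), such that (i₁, j₁) has the largest and (i₂, j₂) the smallest x-coordinate among
all right spots of Q. Then Q' = (Q \ {(i₂, j₂)}) ∪ {(i₁ + 1, j₁ + 1)} is also
right-pyramidal and δ(Q') ≤ δ(Q). -/
private lemma adj_iff (a b c d : ℕ) : gridAdj (a, b) (c, d) ↔
    (c = a + 1 ∧ d = b) ∨ (a = c + 1 ∧ d = b) ∨ (c = a ∧ d = b + 1) ∨ (c = a ∧ b = d + 1) := by
  show |(a : ℤ) - c| + |(b : ℤ) - d| = 1 ↔ _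
  rcases abs_cases ((a : ℤ) - c) with ⟨h1, _⟩ | ⟨h1, _⟩ <;>
    rcases abs_cases ((b : ℤ) - d) with ⟨h3, _⟩ | ⟨h3, _⟩ <;>
      rw [h1, h3] <;> omega

private lemma mem_grid {n a b : ℕ} : (a, b) ∈ gridSet n ↔ 1 ≤ a ∧ a ≤ n ∧ 1 ≤ b ∧ b ≤ n := by
  simp only [gridSet, Finset.mem_product, Finset.mem_Icc]
  omega
theorem rightSpot_move (n : ℕ) (Q : Finset (ℕ × ℕ)) (hQ : Q ⊆ V1 n)
    (hrp : RightPyramidal n Q) (i₁ j₁ i₂ j₂ : ℕ)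
    (hs₁ : RightSpot n Q i₁ j₁) (hs₂ : RightSpot n Q i₂ j₂)
    (hne : (i₁, j₁) ≠ (i₂, j₂))
    (hmax : ∀ i j, RightSpot n Q i j → i ≤ i₁)
    (hmin : ∀ i j, RightSpot n Q i j → i₂ ≤ i) :
    RightPyramidal n (insert (i₁ + 1, j₁ + 1) (Q.erase (i₂, j₂))) ∧
    deltaN n (insert (i₁ + 1, j₁ + 1) (Q.erase (i₂, j₂))) ≤ deltaN n Q := by
  obtain ⟨hpy, hrr⟩ := hrp
  obtain ⟨h1Q, h1g, h1n⟩ := hs₁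
  obtain ⟨h2Q, h2g, h2n⟩ := hs₂
  obtain ⟨hb1a, hb1b, hb1c, hb1d⟩ := mem_grid.mp h1g
  obtain ⟨hb2a, hb2b, hb2c, hb2d⟩ := mem_grid.mp h2g
  obtain ⟨hc1a, hc1b, hc1c, hc1d⟩ := mem_grid.mp (Finset.mem_filter.mp (hQ h1Q)).1
  obtain ⟨hc2a, hc2b, hc2c, hc2d⟩ := mem_grid.mp (Finset.mem_filter.mp (hQ h2Q)).1
  have hle : i₂ ≤ i₁ := hmax i₂ j₂ ⟨h2Q, h2g, h2n⟩
  have hneij : i₁ ≠ i₂ ∨ j₁ ≠ j₂ := by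
    by_contra h
    push_neg at h
    exact hne (by rw [h.1, h.2])
  have hQeven : ∀ p ∈ Q, Even (p.1 + p.2) := fun p hp => (Finset.mem_filter.mp (hQ hp)).2
  have he1 : Even (i₁ + j₁) := hQeven _ h1Q
  have he2 : Even (i₂ + j₂) := hQeven _ h2Q
  have K2 : ∀ a, a + 1 = i₂ → (a, j₂ + 1) ∉ Q := by
    intro a ha h
    have h2 := hrr a (j₂ + 1) h (by omega)
    have hx : a + 2 = i₂ + 1 := by omega
    rw [hx] at h2
    exact h2n h2
  have K3 : (i₂, j₂ + 2) ∉ Q := by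
    intro h
    have h2 := (hpy i₂ (j₂ + 2) h (by omega)).2 (by omega)
    exact h2n h2
  have K4 : ∀ a, a + 2 = i₂ → (a, j₂) ∉ Q := by
    intro a ha h
    have hs : RightSpot n Q a j₂ := ⟨h, mem_grid.mpr (by omega), K2 (a + 1) (by omega)⟩
    have := hmin a j₂ hs
    omega
  have K5 : i₁ + 3 ≤ n → (i₁ + 3, j₁ + 1) ∈ Q := by
    intro hn
    by_contra h
    have hmem : (i₁ + 2, j₁) ∈ Q := hrr i₁ j₁ h1Q (by omega)
    have hs : RightSpot n Q (i₁ + 2) j₁ := ⟨hmem, mem_grid.mpr (by omega), h⟩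
    have := hmax _ _ hs
    omega
  constructor
  · constructor
    · -- Pyramidal
      intro x y hxy hy2
      rcases Finset.mem_insert.mp hxy with hw | hq
      · rw [Prod.mk.injEq] at hw
        obtain ⟨hx, hy⟩ := hw
        subst hx; subst hy
        constructor
        · intro _
          exact Finset.mem_insert_of_mem (Finset.mem_erase.mpr ⟨hne, h1Q⟩)
        · intro hxn
          apply Finset.mem_insert_of_mem
          rw [Finset.mem_erase]
          constructor
          · intro hcon
            rw [Prod.mk.injEq] at hcon
            omega
          · exact hrr i₁ j₁ h1Q (by omega)
      · obtain ⟨hqne, hqQ⟩ := Finset.mem_erase.mp hq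
        have hp := hpy x y hqQ hy2
        constructor
        · intro hx2
          apply Finset.mem_insert_of_mem
          rw [Finset.mem_erase]
          refine ⟨?_, hp.1 hx2⟩
          intro heq
          rw [Prod.mk.injEq] at heq
          have hx : x = i₂ + 1 := by omega
          have hy : y = j₂ + 1 := by omega
          rw [hx, hy] at hqQ
          exact h2n hqQ
        · intro hxn
          apply Finset.mem_insert_of_mem
          rw [Finset.mem_erase]
          refine ⟨?_, hp.2 hxn⟩
          intro heq
          rw [Prod.mk.injEq] at heq
          have hy : y = j₂ + 1 := by omega
          rw [hy] at hqQ
          exact K2 x (by omega) hqQ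
    · -- right-extension
      intro x y hxy hxn
      rcases Finset.mem_insert.mp hxy with hw | hq
      · rw [Prod.mk.injEq] at hw
        obtain ⟨hx, hy⟩ := hw
        subst hx; subst hy
        apply Finset.mem_insert_of_mem
        rw [Finset.mem_erase]
        constructor
        · intro hcon
          rw [Prod.mk.injEq] at hcon
          omega
        · have := K5 (by omega)
          have hx3 : i₁ + 1 + 2 = i₁ + 3 := by omega
          rw [hx3]
          exact this
      · obtain ⟨hqne, hqQ⟩ := Finset.mem_erase.mp hq
        apply Finset.mem_insert_of_mem
        rw [Finset.mem_erase]
        refine ⟨?_, hrr x y hqQ hxn⟩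
        intro heq
        rw [Prod.mk.injEq] at heq
        rw [heq.2] at hqQ
        exact K4 x heq.1 hqQ
  · -- cardinality
    have hUnot : (i₂, j₂ + 1) ∉ gridNbr n (insert (i₁ + 1, j₁ + 1) (Q.erase (i₂, j₂))) := by
      simp only [gridNbr, Finset.mem_filter]
      rintro ⟨hg, hn', p, hp, hadj⟩
      obtain ⟨a, b⟩ := p
      rw [adj_iff] at hadj
      rcases Finset.mem_insert.mp hp with h | h
      · rw [Prod.mk.injEq] at h
        obtain ⟨ha, hb⟩ := h
        subst ha; subst hb
        rcases hneij with h2 | h2 <;>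
          rcases hadj with ⟨h, h'⟩ | ⟨h, h'⟩ | ⟨h, h'⟩ | ⟨h, h'⟩ <;> omega
      · obtain ⟨hpne, hpQ⟩ := Finset.mem_erase.mp h
        rcases hadj with ⟨h, h'⟩ | ⟨h, h'⟩ | ⟨h, h'⟩ | ⟨h, h'⟩
        · rw [← h'] at hpQ
          exact K2 a h.symm hpQ
        · have hab : (a, b) = (i₂ + 1, j₂ + 1) := by rw [Prod.mk.injEq]; omega
          rw [hab] at hpQ
          exact h2n hpQ
        · exact hpne (by rw [Prod.mk.injEq]; omega)
        · have hab : (a, b) = (i₂, j₂ + 2) := by rw [Prod.mk.injEq]; omega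
          rw [hab] at hpQ
          exact K3 hpQ
    unfold deltaN
    apply Finset.card_le_card_of_injOn
      (fun q => if q = (i₁ + 1, j₁ + 2) then (i₂, j₂ + 1) else q)
    · rintro ⟨c, d⟩ hq
      change (c, d) ∈ gridNbr n _ at hq
      show (if ((c, d) : ℕ × ℕ) = (i₁ + 1, j₁ + 2) then (i₂, j₂ + 1) else (c, d)) ∈ gridNbr n Q
      simp only [gridNbr, Finset.mem_filter] at hq
      obtain ⟨hqg, hqn, p, hpQ', hadj⟩ := hq
      obtain ⟨a, b⟩ := p
      have hqnotQ : (c, d) ∉ Q := by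
        intro hcd
        have hq2 : (c, d) = (i₂, j₂) := by
          by_contra hx
          exact hqn (Finset.mem_insert_of_mem (Finset.mem_erase.mpr ⟨hx, hcd⟩))
        rw [Prod.mk.injEq] at hq2
        have hpe : Even (a + b) := by
          rcases Finset.mem_insert.mp hpQ' with h | h
          · rw [Prod.mk.injEq] at h
            obtain ⟨k, hk⟩ := he1
            exact ⟨k + 1, by omega⟩
          · exact hQeven _ (Finset.mem_erase.mp h).2
        rw [adj_iff] at hadj
        obtain ⟨k, hk⟩ := hpe
        obtain ⟨m, hm⟩ := he2
        rcases hadj with ⟨h, h'⟩ | ⟨h, h'⟩ | ⟨h, h'⟩ | ⟨h, h'⟩ <;> omega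
      by_cases hqt : ((c, d) : ℕ × ℕ) = (i₁ + 1, j₁ + 2)
      · rw [if_pos hqt]
        simp only [gridNbr, Finset.mem_filter]
        refine ⟨mem_grid.mpr (by omega), ?_, (i₂, j₂), h2Q, ?_⟩
        · intro h
          have := hQeven _ h
          obtain ⟨k, hk⟩ := this
          obtain ⟨m, hm⟩ := he2
          omega
        · rw [adj_iff]
          omega
      · rw [if_neg hqt]
        simp only [gridNbr, Finset.mem_filter]
        refine ⟨hqg, hqnotQ, ?_⟩
        rcases Finset.mem_insert.mp hpQ' with h | h
        · rw [Prod.mk.injEq] at h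
          obtain ⟨ha, hb⟩ := h
          subst ha; subst hb
          rw [adj_iff] at hadj
          rw [Prod.mk.injEq] at hqt
          obtain ⟨hcg1, hcg2, hcg3, hcg4⟩ := mem_grid.mp hqg
          rcases hadj with ⟨h, h'⟩ | ⟨h, h'⟩ | ⟨h, h'⟩ | ⟨h, h'⟩
          · -- (c,d) = (i₁+2, j₁+1)
            refine ⟨(i₁ + 2, j₁), hrr i₁ j₁ h1Q (by omega), ?_⟩
            rw [show ((c, d) : ℕ × ℕ) = (i₁ + 2, j₁ + 1) by rw [Prod.mk.injEq]; omega]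
            rw [adj_iff]; omega
          · -- (c,d) = (i₁, j₁+1)
            refine ⟨(i₁, j₁), h1Q, ?_⟩
            rw [show ((c, d) : ℕ × ℕ) = (i₁, j₁ + 1) by rw [Prod.mk.injEq]; omega]
            rw [adj_iff]; omega
          · -- (c,d) = (i₁+1, j₁+2) : excluded
            exact absurd (by omega : c = i₁ + 1 ∧ d = j₁ + 2) (by tauto)
          · -- (c,d) = (i₁+1, j₁)
            refine ⟨(i₁, j₁), h1Q, ?_⟩
            rw [show ((c, d) : ℕ × ℕ) = (i₁ + 1, j₁) by rw [Prod.mk.injEq]; omega]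
            rw [adj_iff]; omega
        · exact ⟨(a, b), (Finset.mem_erase.mp h).2, hadj⟩
    · intro q1 h1 q2 h2 heq
      simp only at heq
      by_cases e1 : q1 = ((i₁ + 1, j₁ + 2) : ℕ × ℕ)
      · by_cases e2 : q2 = ((i₁ + 1, j₁ + 2) : ℕ × ℕ)
        · rw [e1, e2]
        · rw [if_pos e1, if_neg e2] at heq
          rw [← heq] at h2
          exact absurd h2 hUnot
      · by_cases e2 : q2 = ((i₁ + 1, j₁ + 2) : ℕ × ℕ)
        · rw [if_neg e1, if_pos e2] at heq
          rw [heq] at h1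
          exact absurd h1 hUnot
        · rw [if_neg e1, if_neg e2] at heq
          exact heq
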